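/- arXiv:2205.04637 — 5 statements merged into one kernel-verified Lean document; each statement's English description precedes it below -/
import Mathlib

section
/- Let μ be a probability measure on ℝᵈ (with the ℓ¹ metric) with finite first moments and let a ∈ {1,…,d}. Then the infimum of ∫ y_a dν over all probability measures ν on ℝᵈ with W₁(μ, ν) ≤ δ equals (∫ y_a dμ) − δ. -/
open MeasureTheory Finset

/-- ℓ¹ distance on ℝᵈ. -/
noncomputable def l1dist {d : ℕ} (y y' : Fin d → ℝ) : ℝ := ∑ a, |y a - y' a|

/-- 1-Wasserstein distance w.r.t. a ground cost `c`: infimum over couplings of the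
expected cost. -/
noncomputable def W1 {E : Type*} [MeasurableSpace E] (c : E → E → ℝ)
    (μ ν : Measure E) : ℝ :=
  sInf {r : ℝ | ∃ π : Measure (E × E), IsProbabilityMeasure π ∧
    π.map Prod.fst = μ ∧ π.map Prod.snd = ν ∧ ∫ p, c p.1 p.2 ∂π = r}

section aux

variable {d : ℕ}

lemma l1_meas (a : Fin d) :
    Measurable (fun p : (Fin d → ℝ) × (Fin d → ℝ) => p.1 a - p.2 a) :=
  ((measurable_pi_apply a).comp measurable_fst).sub
    ((measurable_pi_apply a).comp measurable_snd)

lemma l1dist_meas :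
    Measurable (fun p : (Fin d → ℝ) × (Fin d → ℝ) => l1dist p.1 p.2) := by
  unfold l1dist
  exact Finset.measurable_sum _ (fun b _ => (l1_meas b).abs)

/-- lower bound: any feasible value is at least `∫ y a ∂μ - δ`. -/
lemma lower_bound (μ : Measure (Fin d → ℝ)) [IsProbabilityMeasure μ]
    (hμ : ∀ b : Fin d, Integrable (fun y => y b) μ)
    (δ : ℝ) (a : Fin d) (r : ℝ)
    (hr : ∃ ν : Measure (Fin d → ℝ), IsProbabilityMeasure ν ∧
        (∀ b : Fin d, Integrable (fun y => y b) ν) ∧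
        W1 l1dist μ ν ≤ δ ∧ (∫ y, y a ∂ν) = r) :
    (∫ y, y a ∂μ) - δ ≤ r := by
  obtain ⟨ν, hprob, hint, hW, hval⟩ := hr
  rw [← hval, sub_le_iff_le_add, ← sub_le_iff_le_add']
  refine le_of_forall_pos_le_add (fun ε hε => ?_)
  -- the set of coupling costs
  set C := {t : ℝ | ∃ π : Measure ((Fin d → ℝ) × (Fin d → ℝ)), IsProbabilityMeasure π ∧
    π.map Prod.fst = μ ∧ π.map Prod.snd = ν ∧ ∫ p, l1dist p.1 p.2 ∂π = t} with hC
  have hne : C.Nonempty := by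
    refine ⟨∫ p, l1dist p.1 p.2 ∂(μ.prod ν), μ.prod ν, inferInstance, ?_, ?_, rfl⟩
    · simp [Measure.map_fst_prod, measure_univ]
    · simp [Measure.map_snd_prod, measure_univ]
  have hCδ : sInf C < δ + ε := lt_of_le_of_lt hW (lt_add_of_pos_right δ hε)
  obtain ⟨t, ht, htlt⟩ := exists_lt_of_csInf_lt hne hCδ
  obtain ⟨π, hπprob, hfst, hsnd, hcost⟩ := ht
  -- integrability of coordinates under π
  have hf : ∀ b : Fin d, Integrable (fun p : (Fin d → ℝ) × (Fin d → ℝ) => p.1 b) π := by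
    intro b
    have := (hμ b)
    rw [← hfst] at this
    exact (integrable_map_measure (measurable_pi_apply b).aestronglyMeasurable
      measurable_fst.aemeasurable).mp this
  have hs : ∀ b : Fin d, Integrable (fun p : (Fin d → ℝ) × (Fin d → ℝ) => p.2 b) π := by
    intro b
    have := (hint b)
    rw [← hsnd] at this
    exact (integrable_map_measure (measurable_pi_apply b).aestronglyMeasurable
      measurable_snd.aemeasurable).mp this
  have hcint : Integrable (fun p : (Fin d → ℝ) × (Fin d → ℝ) => l1dist p.1 p.2) π := by
    unfold l1dist
    exact integrable_finset_sum _ (fun b _ => ((hf b).sub (hs b)).abs)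
  -- marginal integrals
  have hμeq : ∫ y, y a ∂μ = ∫ p, p.1 a ∂π := by
    rw [← hfst]
    exact integral_map measurable_fst.aemeasurable
      (measurable_pi_apply a).aestronglyMeasurable
  have hνeq : ∫ y, y a ∂ν = ∫ p, p.2 a ∂π := by
    rw [← hsnd]
    exact integral_map measurable_snd.aemeasurable
      (measurable_pi_apply a).aestronglyMeasurable
  have hdiff : (∫ y, y a ∂μ) - (∫ y, y a ∂ν) = ∫ p, (p.1 a - p.2 a) ∂π := by
    rw [hμeq, hνeq, integral_sub (hf a) (hs a)]
  have hmono : ∫ p, (p.1 a - p.2 a) ∂π ≤ ∫ p, l1dist p.1 p.2 ∂π := by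
    refine integral_mono ((hf a).sub (hs a)) hcint (fun p => ?_)
    refine le_trans (le_abs_self _) ?_
    unfold l1dist
    exact Finset.single_le_sum (f := fun b => |p.1 b - p.2 b|)
      (fun b _ => abs_nonneg _) (Finset.mem_univ a)
  calc (∫ y, y a ∂μ) - (∫ y, y a ∂ν) ≤ ∫ p, l1dist p.1 p.2 ∂π := hdiff ▸ hmono
    _ = t := hcost
    _ ≤ δ + ε := le_of_lt htlt

end aux

theorem stmt_2 {d : ℕ} (μ : Measure (Fin d → ℝ)) [IsProbabilityMeasure μ]
    (hμ : ∀ b : Fin d, Integrable (fun y => y b) μ)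
    (δ : ℝ) (hδ : 0 ≤ δ) (a : Fin d) :
    sInf {r : ℝ | ∃ ν : Measure (Fin d → ℝ), IsProbabilityMeasure ν ∧
        (∀ b : Fin d, Integrable (fun y => y b) ν) ∧
        W1 l1dist μ ν ≤ δ ∧ (∫ y, y a ∂ν) = r}
      = (∫ y, y a ∂μ) - δ := by
  set T : (Fin d → ℝ) → (Fin d → ℝ) := fun y b => y b - if b = a then δ else 0 with hT
  have hTm : Measurable T :=
    measurable_pi_lambda _ (fun b => (measurable_pi_apply b).sub measurable_const)
  set ν : Measure (Fin d → ℝ) := μ.map T with hν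
  have hνprob : IsProbabilityMeasure ν := Measure.isProbabilityMeasure_map hTm.aemeasurable
  have hνint : ∀ b : Fin d, Integrable (fun y => y b) ν := by
    intro b
    rw [hν, integrable_map_measure (measurable_pi_apply b).aestronglyMeasurable
      hTm.aemeasurable]
    exact ((hμ b).sub (integrable_const _) : Integrable (fun y : Fin d → ℝ =>
      y b - if b = a then δ else 0) μ)
  have hνval : ∫ y, y a ∂ν = (∫ y, y a ∂μ) - δ := by
    rw [hν, integral_map hTm.aemeasurable (measurable_pi_apply a).aestronglyMeasurable]
    simp only [hT, if_pos rfl]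
    rw [integral_sub (hμ a) (integrable_const _), integral_const, probReal_univ,
      one_smul]
    simp
  have hWν : W1 l1dist μ ν ≤ δ := by
    have hP : Measurable (fun y : Fin d → ℝ => (y, T y)) := measurable_id.prodMk hTm
    have hcost : ∀ y : Fin d → ℝ, l1dist y (T y) = δ := by
      intro y
      simp [l1dist, hT, apply_ite abs, abs_of_nonneg hδ]
    refine csInf_le ?_ ?_
    · refine ⟨0, fun t ht => ?_⟩
      obtain ⟨π, _, _, _, hint⟩ := ht
      rw [← hint]
      refine integral_nonneg (fun p => ?_)
      exact Finset.sum_nonneg (fun b _ => abs_nonneg _)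
    · refine ⟨μ.map (fun y => (y, T y)), ?_, ?_, ?_, ?_⟩
      · exact Measure.isProbabilityMeasure_map hP.aemeasurable
      · rw [Measure.map_map measurable_fst hP]
        exact Measure.map_id
      · rw [Measure.map_map measurable_snd hP]
        rfl
      · rw [integral_map hP.aemeasurable l1dist_meas.aestronglyMeasurable]
        simp only [hcost]
        simp [measure_univ]
  have hmem : (∫ y, y a ∂μ) - δ ∈ {r : ℝ | ∃ ν : Measure (Fin d → ℝ),
      IsProbabilityMeasure ν ∧ (∀ b : Fin d, Integrable (fun y => y b) ν) ∧
      W1 l1dist μ ν ≤ δ ∧ (∫ y, y a ∂ν) = r} :=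
    ⟨ν, hνprob, hνint, hWν, hνval⟩
  refine le_antisymm (csInf_le ⟨_, fun r hr => lower_bound μ hμ δ a r hr⟩ hmem)
    (le_csInf ⟨_, hmem⟩ (fun r hr => lower_bound μ hμ δ a r hr))
end

section
/- Let μ be a probability measure supported on [c, ∞)ᵈ ⊂ ℝᵈ with finite first moments, let a ∈ {1,…,d}, and suppose m := ∫ y_a dμ satisfies m − δ > c for some δ > 0. Define t : ℝᵈ → ℝᵈ by t(y) = y − (δ(y_a − c)/(m − c))·eₐ. Then t_♯μ is supported on [c, ∞)ᵈ, W₁(μ, t_♯μ) ≤ δ, and ∫ y_a d(t_♯μ) = m − δ. -/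
open MeasureTheory Finset

theorem stmt_4 {d : ℕ} (μ : Measure (Fin d → ℝ)) [IsProbabilityMeasure μ]
    (hμ : ∀ b : Fin d, Integrable (fun y => y b) μ)
    (c : ℝ) (hsupp : ∀ᵐ y ∂μ, ∀ i, c ≤ y i)
    (a : Fin d) (m : ℝ) (hm : m = ∫ y, y a ∂μ)
    (δ : ℝ) (hδ : 0 < δ) (hfeas : c < m - δ)
    (t : (Fin d → ℝ) → (Fin d → ℝ))
    (ht : t = fun y i => if i = a then y a - δ * (y a - c) / (m - c) else y i) :
    (∀ᵐ y ∂(μ.map t), ∀ i, c ≤ y i) ∧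
      W1 l1dist μ (μ.map t) ≤ δ ∧
      (∫ y, y a ∂(μ.map t)) = m - δ := by
  subst ht
  set t : (Fin d → ℝ) → (Fin d → ℝ) :=
    fun y i => if i = a then y a - δ * (y a - c) / (m - c) else y i with ht
  have hmc : (0:ℝ) < m - c := by linarith
  have hmc' : m - c ≠ 0 := ne_of_gt hmc
  have hr1 : δ / (m - c) ≤ 1 := by
    rw [div_le_one hmc]; linarith
  have htm : Measurable t := by
    refine measurable_pi_lambda _ fun i => ?_
    by_cases h : i = a
    · simp only [ht, h, if_true]; fun_prop
    · simp only [ht, if_neg h]; fun_prop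
  -- the pointwise support fact
  have hpt : ∀ y : Fin d → ℝ, (∀ i, c ≤ y i) → ∀ i, c ≤ t y i := by
    intro y hy i
    by_cases h : i = a
    · simp only [ht, h, if_true]
      rw [← div_mul_eq_mul_div]
      nlinarith [mul_nonneg (sub_nonneg.2 (hy a)) (sub_nonneg.2 hr1)]
    · simpa [ht, h] using hy i
  have hsmeas : MeasurableSet {y : Fin d → ℝ | ∀ i, c ≤ y i} := by
    have : {y : Fin d → ℝ | ∀ i, c ≤ y i} = ⋂ i, {y | c ≤ y i} := by
      ext y; simp
    rw [this]
    exact MeasurableSet.iInter fun i => measurableSet_le measurable_const (measurable_pi_apply i)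
  have h1 : ∀ᵐ y ∂(μ.map t), ∀ i, c ≤ y i := by
    rw [ae_map_iff htm.aemeasurable hsmeas]
    filter_upwards [hsupp] with y hy using hpt y hy
  -- integrand rewriting
  have heq : (fun y : Fin d → ℝ => y a - δ * (y a - c) / (m - c))
      = fun y => (1 - δ / (m - c)) * y a + δ * c / (m - c) := by
    funext y; field_simp; ring
  have hint : (∫ y, (y a - δ * (y a - c) / (m - c)) ∂μ) = m - δ := by
    rw [heq, integral_add ((hμ a).const_mul _) (integrable_const _),
      MeasureTheory.integral_const_mul, integral_const]
    simp only [measure_univ, probReal_univ, ENNReal.toReal_one, one_smul]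
    rw [← hm]; field_simp; ring
  have h3 : (∫ y, y a ∂(μ.map t)) = m - δ := by
    rw [integral_map htm.aemeasurable (measurable_pi_apply a).aestronglyMeasurable]
    simpa [ht] using hint
  refine ⟨h1, ?_, h3⟩
  -- Wasserstein bound
  have hcost : Continuous fun p : (Fin d → ℝ) × (Fin d → ℝ) => l1dist p.1 p.2 := by
    unfold l1dist
    exact continuous_finset_sum _ fun i _ => by fun_prop
  have hpair : Measurable fun y : Fin d → ℝ => (y, t y) := measurable_id.prodMk htm
  have hbdd : BddBelow {r : ℝ | ∃ π : Measure ((Fin d → ℝ) × (Fin d → ℝ)),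
      IsProbabilityMeasure π ∧ π.map Prod.fst = μ ∧ π.map Prod.snd = μ.map t ∧
      ∫ p, l1dist p.1 p.2 ∂π = r} := by
    refine ⟨0, fun r hr => ?_⟩
    obtain ⟨π, hπ, -, -, hre⟩ := hr
    rw [← hre]
    refine integral_nonneg fun p => ?_
    exact Finset.sum_nonneg fun i _ => abs_nonneg _
  have hcosteq : (∫ y, l1dist y (t y) ∂μ) = δ := by
    have hsingle : ∀ y : Fin d → ℝ, l1dist y (t y) = |δ * (y a - c) / (m - c)| := by
      intro y
      unfold l1dist
      rw [Finset.sum_eq_single a]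
      · simp [ht]
      · intro b _ hb; simp [ht, hb]
      · intro h; exact absurd (mem_univ a) h
    have hae : (fun y => l1dist y (t y)) =ᵐ[μ]
        fun y => δ * (y a - c) / (m - c) := by
      filter_upwards [hsupp] with y hy
      rw [hsingle y, abs_of_nonneg]
      exact div_nonneg (mul_nonneg hδ.le (sub_nonneg.2 (hy a))) hmc.le
    rw [integral_congr_ae hae]
    have : (fun y : Fin d → ℝ => δ * (y a - c) / (m - c))
        = fun y => (δ / (m - c)) * (y a - c) := by
      funext y; ring
    rw [this, MeasureTheory.integral_const_mul, integral_sub (hμ a) (integrable_const _), integral_const]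
    simp only [measure_univ, probReal_univ, ENNReal.toReal_one, one_smul]
    rw [← hm]; field_simp
  have hmem : δ ∈ {r : ℝ | ∃ π : Measure ((Fin d → ℝ) × (Fin d → ℝ)),
      IsProbabilityMeasure π ∧ π.map Prod.fst = μ ∧ π.map Prod.snd = μ.map t ∧
      ∫ p, l1dist p.1 p.2 ∂π = r} := by
    refine ⟨μ.map (fun y => (y, t y)), Measure.isProbabilityMeasure_map hpair.aemeasurable, ?_, ?_, ?_⟩
    · rw [Measure.map_map measurable_fst hpair]
      have hid : (Prod.fst ∘ fun y : Fin d → ℝ => (y, t y)) = id := rfl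
      rw [hid, Measure.map_id]
    · rw [Measure.map_map measurable_snd hpair]; rfl
    · rw [integral_map hpair.aemeasurable hcost.aestronglyMeasurable]
      exact hcosteq
  exact csInf_le hbdd hmem
end

section
/- Let μ be a probability measure supported on [c, ∞)ᵈ ⊂ ℝᵈ with finite first moments, let a ∈ {1,…,d}, and let m := ∫ y_a dμ. Then the infimum of ∫ y_a dν over probability measures ν supported on [c, ∞)ᵈ with W₁(μ, ν) ≤ δ equals max{m − δ, c}. -/
open MeasureTheory Finset

-- measurability of l1dist
lemma l1dist_measurable {d : ℕ} :
    Measurable (fun p : (Fin d → ℝ) × (Fin d → ℝ) => l1dist p.1 p.2) := by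
  unfold l1dist
  apply Finset.measurable_sum
  intro b _
  exact ((measurable_pi_apply b).comp measurable_fst |>.sub
    ((measurable_pi_apply b).comp measurable_snd)).abs

lemma l1dist_nonneg {d : ℕ} (y y' : Fin d → ℝ) : 0 ≤ l1dist y y' :=
  Finset.sum_nonneg fun _ _ => abs_nonneg _

-- c ≤ mean of coordinate a under measure supported in [c,∞)^d
lemma mean_ge {d : ℕ} (ν : Measure (Fin d → ℝ)) [IsProbabilityMeasure ν]
    (c : ℝ) (hsupp : ∀ᵐ y ∂ν, ∀ i, c ≤ y i) (a : Fin d)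
    (hint : Integrable (fun y => y a) ν) : c ≤ ∫ y, y a ∂ν := by
  have : (∫ _y, c ∂ν) ≤ ∫ y, y a ∂ν := by
    apply integral_mono_ae (integrable_const c) hint
    filter_upwards [hsupp] with y hy using hy a
  simpa using this

noncomputable def shrinkMap {d : ℕ} (a : Fin d) (c θ : ℝ) : (Fin d → ℝ) → (Fin d → ℝ) :=
  fun y i => if i = a then c + θ * (y a - c) else y i

lemma shrinkMap_measurable {d : ℕ} (a : Fin d) (c θ : ℝ) :
    Measurable (shrinkMap a c θ) := by
  apply measurable_pi_lambda
  intro i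
  by_cases h : i = a <;> simp [shrinkMap, h]
  · exact measurable_const.add ((by fun_prop : Measurable fun y : Fin d → ℝ => y a - c).const_mul θ)
  · exact measurable_pi_apply i

lemma shrinkMap_self {d : ℕ} (a : Fin d) (c θ : ℝ) (y : Fin d → ℝ) :
    shrinkMap a c θ y a = c + θ * (y a - c) := by simp [shrinkMap]

lemma shrinkMap_ne {d : ℕ} (a : Fin d) (c θ : ℝ) (y : Fin d → ℝ) (b : Fin d) (h : b ≠ a) :
    shrinkMap a c θ y b = y b := by simp [shrinkMap, h]

lemma forall_coord_measurable {d : ℕ} (c : ℝ) :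
    MeasurableSet {x : Fin d → ℝ | ∀ i, c ≤ x i} := by
  rw [Set.setOf_forall]
  exact MeasurableSet.iInter fun i => measurableSet_le measurable_const (measurable_pi_apply i)

theorem stmt_5 {d : ℕ} (μ : Measure (Fin d → ℝ)) [IsProbabilityMeasure μ]
    (hμ : ∀ b : Fin d, Integrable (fun y => y b) μ)
    (c : ℝ) (hsupp : ∀ᵐ y ∂μ, ∀ i, c ≤ y i)
    (a : Fin d) (m : ℝ) (hm : m = ∫ y, y a ∂μ)
    (δ : ℝ) (hδ : 0 ≤ δ) :
    sInf {r : ℝ | ∃ ν : Measure (Fin d → ℝ), IsProbabilityMeasure ν ∧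
        (∀ b : Fin d, Integrable (fun y => y b) ν) ∧
        (∀ᵐ y ∂ν, ∀ i, c ≤ y i) ∧
        W1 l1dist μ ν ≤ δ ∧ (∫ y, y a ∂ν) = r}
      = max (m - δ) c := by
  have hcm : c ≤ m := hm ▸ mean_ge μ c hsupp a (hμ a)
  set M : ℝ := max (m - δ) c with hM
  have hMc : c ≤ M := le_max_right _ _
  have hMm : M ≤ m := max_le (by linarith) hcm
  have hMδ : m - M ≤ δ := by
    have : m - δ ≤ M := le_max_left _ _
    linarith
  -- lower bound: every r in the set is ≥ M
  have hlb : ∀ r ∈ {r : ℝ | ∃ ν : Measure (Fin d → ℝ), IsProbabilityMeasure ν ∧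
        (∀ b : Fin d, Integrable (fun y => y b) ν) ∧
        (∀ᵐ y ∂ν, ∀ i, c ≤ y i) ∧
        W1 l1dist μ ν ≤ δ ∧ (∫ y, y a ∂ν) = r}, M ≤ r := by
    rintro r ⟨ν, hνprob, hνint, hνsupp, hW, hr⟩
    have hrc : c ≤ r := hr ▸ mean_ge ν c hνsupp a (hνint a)
    -- show m - r ≤ W1 ≤ δ
    have key : m - r ≤ W1 l1dist μ ν := by
      apply le_csInf
      · exact ⟨∫ p, l1dist p.1 p.2 ∂(μ.prod ν), μ.prod ν, by infer_instance,
          by simp [Measure.map_fst_prod], by simp [Measure.map_snd_prod], rfl⟩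
      rintro s ⟨π, hπprob, hπ1, hπ2, hs⟩
      -- integrability of coordinates under π
      have hint1 : ∀ b : Fin d, Integrable (fun p : (Fin d → ℝ) × (Fin d → ℝ) => p.1 b) π := by
        intro b
        have := (hμ b)
        rw [← hπ1] at this
        exact (integrable_map_measure (this.aestronglyMeasurable)
          measurable_fst.aemeasurable).mp this |>.congr (by
            filter_upwards with p; rfl)
      have hint2 : ∀ b : Fin d, Integrable (fun p : (Fin d → ℝ) × (Fin d → ℝ) => p.2 b) π := by
        intro b
        have := (hνint b)
        rw [← hπ2] at this
        exact (integrable_map_measure (this.aestronglyMeasurable)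
          measurable_snd.aemeasurable).mp this |>.congr (by
            filter_upwards with p; rfl)
      have hintd : Integrable (fun p : (Fin d → ℝ) × (Fin d → ℝ) => |p.1 a - p.2 a|) π :=
        ((hint1 a).sub (hint2 a)).abs
      have hintl : Integrable (fun p : (Fin d → ℝ) × (Fin d → ℝ) => l1dist p.1 p.2) π := by
        unfold l1dist
        exact integrable_finset_sum _ fun b _ => ((hint1 b).sub (hint2 b)).abs
      have h1 : ∫ p, p.1 a ∂π = m := by
        have hμ' := hμ a
        rw [← hπ1] at hμ'
        rw [hm, ← hπ1, integral_map measurable_fst.aemeasurable hμ'.aestronglyMeasurable]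
      have h2 : ∫ p, p.2 a ∂π = r := by
        have hν' := hνint a
        rw [← hπ2] at hν'
        rw [← hr, ← hπ2, integral_map measurable_snd.aemeasurable hν'.aestronglyMeasurable]
      have step1 : m - r ≤ ∫ p, |p.1 a - p.2 a| ∂π := by
        have : m - r = ∫ p, (p.1 a - p.2 a) ∂π := by
          rw [integral_sub (hint1 a) (hint2 a), h1, h2]
        rw [this]
        exact integral_mono ((hint1 a).sub (hint2 a)) hintd fun p => le_abs_self _
      have step2 : ∫ p, |p.1 a - p.2 a| ∂π ≤ ∫ p, l1dist p.1 p.2 ∂π := by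
        apply integral_mono hintd hintl
        intro p
        unfold l1dist
        exact Finset.single_le_sum (f := fun b => |p.1 b - p.2 b|)
          (fun b _ => abs_nonneg _) (mem_univ a)
      linarith [hs ▸ (step1.trans step2)]
    have : m - r ≤ δ := key.trans hW
    simp only [hM, max_le_iff]
    constructor <;> linarith
  -- membership: construct ν achieving M
  have hmem : M ∈ {r : ℝ | ∃ ν : Measure (Fin d → ℝ), IsProbabilityMeasure ν ∧
        (∀ b : Fin d, Integrable (fun y => y b) ν) ∧
        (∀ᵐ y ∂ν, ∀ i, c ≤ y i) ∧
        W1 l1dist μ ν ≤ δ ∧ (∫ y, y a ∂ν) = r} := by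
    set θ : ℝ := if m = c then 0 else (M - c) / (m - c) with hθdef
    have hθprops : 0 ≤ θ ∧ θ ≤ 1 ∧ θ * (m - c) = M - c := by
      rw [hθdef]
      split
      · rename_i h; refine ⟨le_refl 0, zero_le_one, ?_⟩
        have : M = c := le_antisymm (by rw [hM]; exact max_le (by linarith) le_rfl) hMc
        rw [this]; ring
      · rename_i h
        have hmc : c < m := lt_of_le_of_ne hcm (Ne.symm h)
        refine ⟨div_nonneg (by linarith) (by linarith), ?_, ?_⟩
        · rw [div_le_one (by linarith)]; linarith
        · exact div_mul_cancel₀ _ (ne_of_gt (by linarith))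
    obtain ⟨hθ0, hθ1, hθM⟩ := hθprops
    -- transport map: shrink coordinate a toward c
    set T : (Fin d → ℝ) → (Fin d → ℝ) := shrinkMap a c θ with hTdef
    have hTmeas : Measurable T := shrinkMap_measurable a c θ
    have hTa : ∀ y, T y a = c + θ * (y a - c) := shrinkMap_self a c θ
    have hTb : ∀ y, ∀ b, b ≠ a → T y b = y b := shrinkMap_ne a c θ
    set ν : Measure (Fin d → ℝ) := μ.map T with hνdef
    have hνprob : IsProbabilityMeasure ν := Measure.isProbabilityMeasure_map hTmeas.aemeasurable
    have hia : Integrable (fun y => c + θ * (y a - c)) μ :=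
      (integrable_const c).add (((hμ a).sub (integrable_const c)).const_mul θ)
    have hνint : ∀ b : Fin d, Integrable (fun y => y b) ν := by
      intro b
      rw [hνdef, integrable_map_measure (measurable_pi_apply b).aestronglyMeasurable
        hTmeas.aemeasurable]
      by_cases h : b = a
      · subst h
        apply hia.congr
        filter_upwards with y
        simp [Function.comp, hTa]
      · apply (hμ b).congr
        filter_upwards with y
        simp [Function.comp, hTb y b h]
    have hνsupp : ∀ᵐ y ∂ν, ∀ i, c ≤ y i := by
      rw [hνdef, ae_map_iff hTmeas.aemeasurable]
      · filter_upwards [hsupp] with y hy i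
        by_cases h : i = a
        · rw [h, hTa]
          nlinarith [hy a]
        · rw [hTb y i h]; exact hy i
      · exact forall_coord_measurable c
    have hsubint : ∫ y, (y a - c) ∂μ = m - c := by
      rw [integral_sub (hμ a) (integrable_const c), integral_const, ← hm]
      simp
    have hνmean : ∫ y, y a ∂ν = M := by
      rw [hνdef, integral_map hTmeas.aemeasurable (measurable_pi_apply a).aestronglyMeasurable]
      have : ∫ y, (T y) a ∂μ = ∫ y, (c + θ * (y a - c)) ∂μ := by
        apply integral_congr_ae
        filter_upwards with y
        rw [hTa]
      have h2' : Integrable (fun y : Fin d → ℝ => θ * (y a - c)) μ := by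
        exact ((hμ a).sub (integrable_const c)).const_mul θ
      have e1 : ∫ y, θ * (y a - c) ∂μ = θ * (m - c) := by
        rw [← hsubint]; exact integral_const_mul θ _
      have e2 : ∫ (_ : Fin d → ℝ), c ∂μ = c := by simp
      have hsum : ∫ y, (c + θ * (y a - c)) ∂μ = c + θ * (m - c) := by
        rw [integral_add (integrable_const c) h2', e1, e2]
      rw [this, hsum]
      linarith
    have hW : W1 l1dist μ ν ≤ δ := by
      set g : (Fin d → ℝ) → (Fin d → ℝ) × (Fin d → ℝ) := fun y => (y, T y) with hgdef
      have hgmeas : Measurable g := measurable_id.prodMk hTmeas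
      have hcost : ∫ p, l1dist p.1 p.2 ∂(μ.map g) = m - M := by
        rw [integral_map hgmeas.aemeasurable l1dist_measurable.aestronglyMeasurable]
        have hpt : ∀ᵐ y ∂μ, l1dist (g y).1 (g y).2 = (1 - θ) * (y a - c) := by
          filter_upwards [hsupp] with y hy
          have h1 : l1dist (g y).1 (g y).2 = |y a - T y a| := by
            unfold l1dist
            apply Finset.sum_eq_single_of_mem a (mem_univ a)
            intro b _ hb
            rw [hgdef]
            simp only
            rw [hTb y b hb, sub_self, abs_zero]
          rw [h1, hTa]
          have h2 : y a - (c + θ * (y a - c)) = (1 - θ) * (y a - c) := by ring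
          rw [h2]
          exact abs_of_nonneg (mul_nonneg (by linarith) (by linarith [hy a]))
        rw [integral_congr_ae hpt]
        have : ∫ y, (1 - θ) * (y a - c) ∂μ = (1 - θ) * (m - c) := by
          rw [← hsubint]; exact integral_const_mul _ _
        rw [this]
        linarith
      have hfst : (μ.map g).map Prod.fst = μ := by
        rw [Measure.map_map measurable_fst hgmeas]
        have : Prod.fst ∘ g = id := rfl
        rw [this, Measure.map_id]
      have hsnd : (μ.map g).map Prod.snd = ν := by
        rw [Measure.map_map measurable_snd hgmeas]
        rfl
      have hWle : W1 l1dist μ ν ≤ m - M := by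
        apply csInf_le
        · refine ⟨0, ?_⟩
          rintro s ⟨π, _, _, _, hs⟩
          exact hs ▸ integral_nonneg fun p => l1dist_nonneg _ _
        · exact ⟨μ.map g, Measure.isProbabilityMeasure_map hgmeas.aemeasurable, hfst, hsnd, hcost⟩
      linarith
    exact ⟨ν, hνprob, hνint, hνsupp, hW, hνmean⟩
  have hne : {r : ℝ | ∃ ν : Measure (Fin d → ℝ), IsProbabilityMeasure ν ∧
        (∀ b : Fin d, Integrable (fun y => y b) ν) ∧
        (∀ᵐ y ∂ν, ∀ i, c ≤ y i) ∧
        W1 l1dist μ ν ≤ δ ∧ (∫ y, y a ∂ν) = r}.Nonempty := ⟨M, hmem⟩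
  exact le_antisymm (csInf_le ⟨M, hlb⟩ hmem) (le_csInf hne hlb)
end

section
/- Let μ be a probability measure supported on [c, ∞)ᵈ with finite first moments, a ∈ {1,…,d}, m := ∫ y_a dμ, and suppose m − δ ≤ c. Define t : ℝᵈ → ℝᵈ replacing the a-th coordinate with c: t(y)_a = c and t(y)_b = y_b for b ≠ a. Then t_♯μ is supported on [c, ∞)ᵈ, W₁(μ, t_♯μ) = m − c ≤ δ, and ∫ y_a d(t_♯μ) = c. -/
open MeasureTheory Finset

theorem stmt_6 {d : ℕ} (μ : Measure (Fin d → ℝ)) [IsProbabilityMeasure μ]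
    (hμ : ∀ b : Fin d, Integrable (fun y => y b) μ)
    (c : ℝ) (hsupp : ∀ᵐ y ∂μ, ∀ i, c ≤ y i)
    (a : Fin d) (m : ℝ) (hm : m = ∫ y, y a ∂μ)
    (δ : ℝ) (hδ : m - δ ≤ c)
    (t : (Fin d → ℝ) → (Fin d → ℝ))
    (ht : t = fun y i => if i = a then c else y i) :
    (∀ᵐ y ∂(μ.map t), ∀ i, c ≤ y i) ∧
      W1 l1dist μ (μ.map t) = m - c ∧ m - c ≤ δ ∧
      (∫ y, y a ∂(μ.map t)) = c := by
  have htm : Measurable t := by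
    subst ht
    exact measurable_pi_lambda _ fun i => by
      by_cases h : i = a <;> simp [h, measurable_pi_apply]
  have hset : MeasurableSet {y : Fin d → ℝ | ∀ i, c ≤ y i} := by
    have : {y : Fin d → ℝ | ∀ i, c ≤ y i} = ⋂ i, {y | c ≤ y i} := by ext; simp
    rw [this]
    exact MeasurableSet.iInter fun i =>
      measurableSet_le measurable_const (measurable_pi_apply i)
  -- part 1
  have h1 : ∀ᵐ y ∂(μ.map t), ∀ i, c ≤ y i := by
    rw [ae_map_iff htm.aemeasurable hset]
    filter_upwards [hsupp] with y hy i
    subst ht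
    by_cases h : i = a <;> simp [h, hy i]
  -- part 4
  have h4 : (∫ y, y a ∂(μ.map t)) = c := by
    rw [integral_map htm.aemeasurable (measurable_pi_apply a).aestronglyMeasurable]
    subst ht
    simp
  -- cost along the canonical coupling
  have hcost : ∀ᵐ y ∂μ, l1dist y (t y) = y a - c := by
    filter_upwards [hsupp] with y hy
    subst ht
    unfold l1dist
    rw [Finset.sum_eq_single a]
    · simp [abs_of_nonneg (sub_nonneg.mpr (hy a))]
    · intro b _ hb; simp [hb]
    · simp
  have hcostint : ∫ y, l1dist y (t y) ∂μ = m - c := by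
    rw [integral_congr_ae hcost, integral_sub (hμ a) (integrable_const c),
      integral_const]
    simp [hm]
  have hmem : (m - c) ∈ {r : ℝ | ∃ π : Measure ((Fin d → ℝ) × (Fin d → ℝ)),
      IsProbabilityMeasure π ∧ π.map Prod.fst = μ ∧ π.map Prod.snd = μ.map t ∧
      ∫ p, l1dist p.1 p.2 ∂π = r} := by
    have hg : Measurable (fun y : Fin d → ℝ => (y, t y)) := measurable_id.prodMk htm
    refine ⟨μ.map (fun y => (y, t y)), ?_, ?_, ?_, ?_⟩
    · exact Measure.isProbabilityMeasure_map hg.aemeasurable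
    · rw [Measure.map_map measurable_fst hg]
      have h2 : (Prod.fst ∘ fun y : Fin d → ℝ => (y, t y)) = id := rfl
      rw [h2, Measure.map_id]
    · rw [Measure.map_map measurable_snd hg]
      rfl
    · rw [integral_map hg.aemeasurable]
      · exact hcostint
      · exact (Measurable.aestronglyMeasurable (by
          unfold l1dist
          exact Finset.measurable_sum _ fun b _ =>
            (((measurable_pi_apply b).comp measurable_fst).sub
              ((measurable_pi_apply b).comp measurable_snd)).abs))
  -- lower bound on any coupling
  have hlb : ∀ r ∈ {r : ℝ | ∃ π : Measure ((Fin d → ℝ) × (Fin d → ℝ)),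
      IsProbabilityMeasure π ∧ π.map Prod.fst = μ ∧ π.map Prod.snd = μ.map t ∧
      ∫ p, l1dist p.1 p.2 ∂π = r}, m - c ≤ r := by
    rintro r ⟨π, hπ, hfst, hsnd, hint⟩
    have hint1 : ∀ b : Fin d, Integrable (fun p : (Fin d → ℝ) × (Fin d → ℝ) => p.1 b) π := by
      intro b
      have := hμ b
      rw [← hfst] at this
      exact (integrable_map_measure (measurable_pi_apply b).aestronglyMeasurable
        measurable_fst.aemeasurable).mp this
    have hint2 : ∀ b : Fin d, Integrable (fun p : (Fin d → ℝ) × (Fin d → ℝ) => p.2 b) π := by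
      intro b
      have hb : Integrable (fun y : Fin d → ℝ => y b) (μ.map t) := by
        rw [integrable_map_measure (measurable_pi_apply b).aestronglyMeasurable
          htm.aemeasurable]
        subst ht
        by_cases h : b = a
        · exact (integrable_const c).congr
            (by filter_upwards with y; simp [Function.comp, h])
        · exact (hμ b).congr
            (by filter_upwards with y; simp [Function.comp, h])
      rw [← hsnd] at hb
      exact (integrable_map_measure (measurable_pi_apply b).aestronglyMeasurable
        measurable_snd.aemeasurable).mp hb
    have hintabs : ∀ b : Fin d,
        Integrable (fun p : (Fin d → ℝ) × (Fin d → ℝ) => |p.1 b - p.2 b|) π :=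
      fun b => ((hint1 b).sub (hint2 b)).abs
    have hcostI : Integrable (fun p : (Fin d → ℝ) × (Fin d → ℝ) => l1dist p.1 p.2) π := by
      unfold l1dist
      exact integrable_finset_sum _ fun b _ => hintabs b
    have hI1 : ∫ p, p.1 a ∂π = m := by
      rw [hm, ← hfst]
      exact (integral_map (μ := π) (f := fun y : Fin d → ℝ => y a)
        measurable_fst.aemeasurable
        (measurable_pi_apply a).aestronglyMeasurable).symm
    have hI2 : ∫ p, p.2 a ∂π = c := by
      rw [← h4, ← hsnd]
      exact (integral_map (μ := π) (f := fun y : Fin d → ℝ => y a)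
        measurable_snd.aemeasurable
        (measurable_pi_apply a).aestronglyMeasurable).symm
    calc m - c = ∫ p, (p.1 a - p.2 a) ∂π := by
          rw [integral_sub (hint1 a) (hint2 a), hI1, hI2]
      _ ≤ ∫ p, |p.1 a - p.2 a| ∂π :=
          integral_mono ((hint1 a).sub (hint2 a)) (hintabs a)
            (fun p => le_abs_self _)
      _ ≤ ∫ p, l1dist p.1 p.2 ∂π := by
          refine integral_mono (hintabs a) hcostI fun p => ?_
          unfold l1dist
          exact Finset.single_le_sum (f := fun b => |p.1 b - p.2 b|)
            (fun b _ => abs_nonneg _) (Finset.mem_univ a)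
      _ = r := hint
  refine ⟨h1, ?_, by linarith, h4⟩
  unfold W1
  exact le_antisymm (csInf_le ⟨m - c, hlb⟩ hmem) (le_csInf ⟨_, hmem⟩ hlb)
end

section
/- Let μ be a probability measure on ℝᵈ with finite first moments, a ∈ {1,…,d}, and δ ≥ 0. Suppose ν is a probability measure on ℝᵈ with W₁(μ, ν) ≤ δ (ℓ¹ ground metric). Then ∫ y_a dν ≥ (∫ y_a dμ) − δ, with equality attained by ν = t_♯μ for t(y) = y − δ eₐ. Consequently the infimum over the Wasserstein ball is attained. -/
open MeasureTheory Finset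

theorem stmt_10 {d : ℕ} (μ : Measure (Fin d → ℝ)) [IsProbabilityMeasure μ]
    (hμ : ∀ b : Fin d, Integrable (fun y => y b) μ)
    (a : Fin d) (δ : ℝ) (hδ : 0 ≤ δ)
    (t : (Fin d → ℝ) → (Fin d → ℝ))
    (ht : t = fun y i => y i - if i = a then δ else 0) :
    (∀ ν : Measure (Fin d → ℝ), IsProbabilityMeasure ν →
        (∀ b : Fin d, Integrable (fun y => y b) ν) →
        W1 l1dist μ ν ≤ δ → (∫ y, y a ∂μ) - δ ≤ ∫ y, y a ∂ν) ∧
      W1 l1dist μ (μ.map t) ≤ δ ∧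
      (∫ y, y a ∂(μ.map t)) = (∫ y, y a ∂μ) - δ := by
  have htm : Measurable t := by
    subst ht
    exact measurable_pi_lambda _ (fun i => (measurable_pi_apply i).sub measurable_const)
  have hta : ∀ y, t y a = y a - δ := by intro y; simp [ht]
  refine ⟨?_, ?_, ?_⟩
  · -- lower bound part
    intro ν hν hνint hW
    have key : (∫ y, y a ∂μ) - ∫ y, y a ∂ν ≤ W1 l1dist μ ν := by
      apply le_csInf
      · refine ⟨∫ p, l1dist p.1 p.2 ∂(μ.prod ν), μ.prod ν, inferInstance, ?_, ?_, rfl⟩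
        · simp [Measure.map_fst_prod]
        · simp [Measure.map_snd_prod]
      · rintro r ⟨π, hπ, hfst, hsnd, rfl⟩
        have h1 : ∀ b, Integrable (fun p : (Fin d → ℝ) × (Fin d → ℝ) => p.1 b) π := by
          intro b
          have := hμ b
          rw [← hfst] at this
          exact (integrable_map_measure (measurable_pi_apply b).aestronglyMeasurable
            measurable_fst.aemeasurable).mp this
        have h2 : ∀ b, Integrable (fun p : (Fin d → ℝ) × (Fin d → ℝ) => p.2 b) π := by
          intro b
          have := hνint b
          rw [← hsnd] at this
          exact (integrable_map_measure (measurable_pi_apply b).aestronglyMeasurable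
            measurable_snd.aemeasurable).mp this
        have hL : Integrable (fun p : (Fin d → ℝ) × (Fin d → ℝ) => l1dist p.1 p.2) π := by
          simp only [l1dist]
          exact integrable_finset_sum _ (fun b _ => ((h1 b).sub (h2 b)).abs)
        have hIμ : ∫ y, y a ∂μ = ∫ p, p.1 a ∂π := by
          rw [← hfst]
          exact integral_map measurable_fst.aemeasurable
            (measurable_pi_apply a).aestronglyMeasurable
        have hIν : ∫ y, y a ∂ν = ∫ p, p.2 a ∂π := by
          rw [← hsnd]
          exact integral_map measurable_snd.aemeasurable
            (measurable_pi_apply a).aestronglyMeasurable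
        rw [hIμ, hIν, ← integral_sub (h1 a) (h2 a)]
        calc ∫ p, (p.1 a - p.2 a) ∂π ≤ ∫ p, |p.1 a - p.2 a| ∂π :=
              integral_mono ((h1 a).sub (h2 a)) ((h1 a).sub (h2 a)).abs
                (fun p => le_abs_self _)
          _ ≤ ∫ p, l1dist p.1 p.2 ∂π := by
              refine integral_mono ((h1 a).sub (h2 a)).abs hL (fun p => ?_)
              exact Finset.single_le_sum (f := fun b => |p.1 b - p.2 b|)
                (fun b _ => abs_nonneg _) (mem_univ a)
    linarith [hW, key]
  · -- W1 μ (μ.map t) ≤ δ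
    have hg : Measurable (fun y : Fin d → ℝ => (y, t y)) := measurable_id.prodMk htm
    have hmem : δ ∈ {r : ℝ | ∃ π : Measure ((Fin d → ℝ) × (Fin d → ℝ)),
        IsProbabilityMeasure π ∧ π.map Prod.fst = μ ∧ π.map Prod.snd = μ.map t ∧
        ∫ p, l1dist p.1 p.2 ∂π = r} := by
      refine ⟨μ.map (fun y => (y, t y)), ?_, ?_, ?_, ?_⟩
      · exact Measure.isProbabilityMeasure_map hg.aemeasurable
      · rw [Measure.map_map measurable_fst hg]; exact Measure.map_id
      · rw [Measure.map_map measurable_snd hg]; rfl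
      · rw [integral_map hg.aemeasurable]
        · have : ∀ y : Fin d → ℝ, l1dist y (t y) = δ := by
            intro y
            simp only [l1dist, ht]
            have : ∀ b : Fin d, |y b - (y b - if b = a then δ else 0)| =
                if b = a then |δ| else 0 := by
              intro b; by_cases hb : b = a <;> simp [hb]
            rw [Finset.sum_congr rfl (fun b _ => this b)]
            simp [abs_of_nonneg hδ]
          simp only [this]
          simp
        · have : Measurable (fun p : (Fin d → ℝ) × (Fin d → ℝ) => l1dist p.1 p.2) := by
            simp only [l1dist]
            exact Finset.measurable_sum _ (fun b _ =>
              (((measurable_pi_apply b).comp measurable_fst).sub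
                ((measurable_pi_apply b).comp measurable_snd)).abs)
          exact this.aestronglyMeasurable
    refine csInf_le ⟨0, ?_⟩ hmem
    rintro r ⟨π, hπ, -, -, rfl⟩
    exact integral_nonneg (fun p => Finset.sum_nonneg (fun b _ => abs_nonneg _))
  · -- integral under pushforward
    rw [integral_map htm.aemeasurable (measurable_pi_apply a).aestronglyMeasurable]
    simp only [hta]
    rw [integral_sub (hμ a) (integrable_const δ)]
    simp
end
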